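/- (Trade-off between work and fluctuation bound) Let W^{(c)}(ρ) = β^{-1}(log Z' − log γ(c)) with γ(c) = X_u e^{ν(c)} + Z_+ e^{βc} + Z_− e^{−βc}, where ν(c) = β/X_u · (β^{-1} H_u + c(X_− − X_+) − ⟨E_u⟩), under the constraint X_+ ≤ 1/2 (valid for any c-bounded distribution). Then ∂W^{(c)}/∂c ≤ 1 for all c, and consequently W^{(c)}(ρ) ≤ W^{(0)}(ρ) + c. -/

import Mathlib

/-- Trade-off between work and fluctuation bound: for
`W(c) = β⁻¹(log Z' − log γ(c))` with
`γ(c) = X_u e^{ν(c)} + Z₊ e^{βc} + Z₋ e^{−βc}` and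
`ν(c) = (β/X_u)(β⁻¹ H_u + c(X₋ − X₊) − ⟨E_u⟩)`, under `X₊ ≤ 1/2` one has
`∂W/∂c ≤ 1`, and consequently `W(c) ≤ W(0) + c` for `c ≥ 0`. -/
theorem c_bounded_work_growth_le_one
    (β Z' Xp Xm Xu Hu Eu Zp Zm : ℝ)
    (hβ : 0 < β) (hZ' : 0 < Z')
    (hXp : 0 ≤ Xp) (hXm : 0 ≤ Xm) (hXu : 0 < Xu)
    (hsum : Xu = 1 - Xp - Xm)
    (hZp : 0 ≤ Zp) (hZm : 0 ≤ Zm)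
    (hXphalf : Xp ≤ 1 / 2)
    (ν γ W : ℝ → ℝ)
    (hν : ∀ c, ν c = β / Xu * (β⁻¹ * Hu + c * (Xm - Xp) - Eu))
    (hγ : ∀ c, γ c = Xu * Real.exp (ν c)
        + Zp * Real.exp (β * c) + Zm * Real.exp (-(β * c)))
    (hW : ∀ c, W c = β⁻¹ * (Real.log Z' - Real.log (γ c))) :
    (∀ c, deriv W c ≤ 1) ∧ (∀ c, 0 ≤ c → W c ≤ W 0 + c) := by
  have hνf : ν = fun c => β / Xu * (β⁻¹ * Hu + c * (Xm - Xp) - Eu) := funext hν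
  have hγf : γ = fun c => Xu * Real.exp (ν c)
      + Zp * Real.exp (β * c) + Zm * Real.exp (-(β * c)) := funext hγ
  have hWf : W = fun c => β⁻¹ * (Real.log Z' - Real.log (γ c)) := funext hW
  set s : ℝ := β / Xu * (Xm - Xp) with hs
  have hνd : ∀ c, HasDerivAt ν s c := by
    intro c
    rw [hνf]
    have h1 : HasDerivAt (fun c : ℝ => c * (Xm - Xp)) (Xm - Xp) c := by
      simpa using (hasDerivAt_id c).mul_const (Xm - Xp)
    have h2 := ((h1.const_add (β⁻¹ * Hu)).sub_const Eu).const_mul (β / Xu)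
    simpa [hs, mul_comm] using h2
  have hγpos : ∀ c, 0 < γ c := by
    intro c
    rw [hγ]
    have := Real.exp_pos (ν c)
    positivity
  -- derivative of γ
  have hγd : ∀ c, HasDerivAt γ
      (Xu * (s * Real.exp (ν c)) + Zp * (β * Real.exp (β * c))
        + Zm * (-β * Real.exp (-(β * c)))) c := by
    intro c
    rw [hγf]
    have h1 : HasDerivAt (fun c => Real.exp (ν c)) (s * Real.exp (ν c)) c := by
      simpa [mul_comm, Function.comp_def] using (Real.hasDerivAt_exp (ν c)).comp c (hνd c)
    have h2 : HasDerivAt (fun c : ℝ => Real.exp (β * c)) (β * Real.exp (β * c)) c := by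
      simpa [mul_comm, Function.comp_def] using
        (Real.hasDerivAt_exp (β * c)).comp c ((hasDerivAt_id c).const_mul β)
    have h3 : HasDerivAt (fun c : ℝ => Real.exp (-(β * c))) (-β * Real.exp (-(β * c))) c := by
      have := (Real.hasDerivAt_exp (-(β * c))).comp c
        (((hasDerivAt_id c).const_mul β).neg)
      simpa [mul_comm, Function.comp_def, Pi.neg_apply] using this
    exact ((h1.const_mul Xu).add (h2.const_mul Zp)).add (h3.const_mul Zm)
  have hWd : ∀ c, HasDerivAt W (β⁻¹ * (0 - (Xu * (s * Real.exp (ν c))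
      + Zp * (β * Real.exp (β * c)) + Zm * (-β * Real.exp (-(β * c)))) / γ c)) c := by
    intro c
    rw [hWf]
    have hlog : HasDerivAt (fun c => Real.log (γ c))
        ((Xu * (s * Real.exp (ν c)) + Zp * (β * Real.exp (β * c))
          + Zm * (-β * Real.exp (-(β * c)))) / γ c) c :=
      (hγd c).log (hγpos c).ne'
    exact ((hasDerivAt_const c (Real.log Z')).sub hlog).const_mul β⁻¹
  have key : ∀ c, β⁻¹ * (0 - (Xu * (s * Real.exp (ν c))
      + Zp * (β * Real.exp (β * c)) + Zm * (-β * Real.exp (-(β * c)))) / γ c) ≤ 1 := by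
    intro c
    have hg := hγpos c
    have hEν := (Real.exp_pos (ν c)).le
    have hEp := (Real.exp_pos (β * c)).le
    have hEm := (Real.exp_pos (-(β * c))).le
    have hXus : Xu * s = β * (Xm - Xp) := by
      rw [hs]; field_simp
    have h2Xp : (0:ℝ) ≤ 1 - 2 * Xp := by linarith
    rw [inv_mul_le_iff₀ hβ, mul_one, zero_sub, ← neg_div, div_le_iff₀ hg]
    have hXusν : Xu * (s * Real.exp (ν c)) = β * (Xm - Xp) * Real.exp (ν c) := by
      rw [← mul_assoc, hXus]
    have hXuν : β * (Xu * Real.exp (ν c)) = β * (1 - Xp - Xm) * Real.exp (ν c) := by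
      rw [hsum]; ring
    rw [hγ c]
    nlinarith [mul_nonneg (mul_nonneg hβ.le hZp) hEp,
      mul_nonneg (mul_nonneg hβ.le h2Xp) hEν]
  constructor
  · intro c
    rw [(hWd c).deriv]
    exact key c
  · intro c hc
    have hWdiff : Differentiable ℝ W := fun x => (hWd x).differentiableAt
    have hmono : MonotoneOn (fun c => c - W c) (Set.Icc 0 c) := by
      apply monotoneOn_of_deriv_nonneg (convex_Icc 0 c)
      · exact (differentiable_id.sub hWdiff).continuous.continuousOn
      · exact (differentiable_id.sub hWdiff).differentiableOn
      · intro x _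
        have hd : HasDerivAt (fun c => c - W c)
            (1 - β⁻¹ * (0 - (Xu * (s * Real.exp (ν x)) + Zp * (β * Real.exp (β * x))
              + Zm * (-β * Real.exp (-(β * x)))) / γ x)) x :=
          (hasDerivAt_id x).sub (hWd x)
        rw [hd.deriv]
        linarith [key x]
    have h0 : (fun c => c - W c) 0 ≤ (fun c => c - W c) c := by
      apply hmono (Set.left_mem_Icc.2 hc) (Set.right_mem_Icc.2 hc) hc
    simp only at h0
    linarith
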